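/- Failure of full abstraction: the type (1⊸1)⊸(1⊸1) belongs to ⟦I⟧ but not to ⟦Y*⟧, hence ⟦I⟧ ⊄ ⟦Y*⟧ even though I ⊑ Y* observationally; therefore the relational model given by the type system is not fully abstract. -/

import Mathlib

-- Computational and parallel types
mutual
  inductive CTy : Type
    | one : CTy
    | tens : CTy → CTy → CTy
    | arr : CTy → PTy → CTy
  inductive PTy : Type
    | ofC : CTy → PTy
    | par : PTy → PTy → PTy
end

-- Type equivalence: AC of ⊗ and ⅋, 1 neutral for ⊗
mutual
  inductive CEq : CTy → CTy → Prop
    | refl (τ) : CEq τ τ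
    | symm : CEq τ ρ → CEq ρ τ
    | trans : CEq τ ρ → CEq ρ σ → CEq τ σ
    | comm (τ ρ) : CEq (.tens τ ρ) (.tens ρ τ)
    | assoc (τ ρ σ) : CEq (.tens (.tens τ ρ) σ) (.tens τ (.tens ρ σ))
    | unit (τ) : CEq (.tens τ .one) τ
    | tensCongr : CEq τ τ' → CEq ρ ρ' → CEq (.tens τ ρ) (.tens τ' ρ')
    | arrCongr : CEq τ τ' → PEq α α' → CEq (.arr τ α) (.arr τ' α')
  inductive PEq : PTy → PTy → Prop
    | refl (α) : PEq α α
    | symm : PEq α β → PEq β α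
    | trans : PEq α β → PEq β γ → PEq α γ
    | comm (α β) : PEq (.par α β) (.par β α)
    | assoc (α β γ) : PEq (.par (.par α β) γ) (.par α (.par β γ))
    | parCongr : PEq α α' → PEq β β' → PEq (.par α β) (.par α' β')
    | ofC : CEq τ τ' → PEq (.ofC τ) (.ofC τ')
end

def Ctx : Type := ℕ → CTy
def Ctx.empty : Ctx := fun _ => CTy.one
def Ctx.tens (Γ Δ : Ctx) : Ctx := fun n => CTy.tens (Γ n) (Δ n)
def Ctx.single (x : ℕ) (τ : CTy) : Ctx := fun n => if n = x then τ else CTy.one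
def Ctx.cons (τ : CTy) (Γ : Ctx) : Ctx := fun n =>
  match n with
  | 0 => τ
  | n+1 => Γ n
def CtxEq (Γ Δ : Ctx) : Prop := ∀ n, CEq (Γ n) (Δ n)

def tensList (l : List CTy) : CTy := l.foldr CTy.tens CTy.one
def tensFin (n : ℕ) (f : Fin n → CTy) : CTy := tensList (List.ofFn f)
def tensCtxFin (n : ℕ) (Δ : Fin n → Ctx) : Ctx := fun x => tensFin n (fun i => Δ i x)

def parList : List PTy → PTy
  | [] => PTy.ofC CTy.one
  | [α] => α
  | α :: β :: rest => PTy.par α (parList (β :: rest))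

def parFin (n : ℕ) (f : Fin n → PTy) : PTy := parList (List.ofFn f)

/-- ⅋ᵏ1 : the par of k copies of 1 (left associated); junk value at 0. -/
def parOnes : ℕ → PTy
  | 0 => PTy.ofC CTy.one
  | 1 => PTy.ofC CTy.one
  | n+2 => PTy.par (parOnes (n+1)) (PTy.ofC CTy.one)

/-- Terms of Λ₊∥ in de Bruijn notation. -/
inductive Tm : Type
  | var : ℕ → Tm
  | lam : Tm → Tm
  | app : Tm → Tm → Tm
  | plus : Tm → Tm → Tm
  | par : Tm → Tm → Tm

def IsValue : Tm → Prop
  | .var _ => True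
  | .lam _ => True
  | _ => False

def IsPar : Tm → Prop
  | .par _ _ => True
  | _ => False

def shiftTm (c : ℕ) : Tm → Tm
  | .var n => if n < c then .var n else .var (n+1)
  | .lam M => .lam (shiftTm (c+1) M)
  | .app M N => .app (shiftTm c M) (shiftTm c N)
  | .plus M N => .plus (shiftTm c M) (shiftTm c N)
  | .par M N => .par (shiftTm c M) (shiftTm c N)

/-- Capture-avoiding substitution `M[V/k]` (de Bruijn). -/
def substTm : Tm → ℕ → Tm → Tm
  | .var n, k, V => if n = k then V else if k < n then .var (n-1) else .var n
  | .lam M, k, V => .lam (substTm M (k+1) (shiftTm 0 V))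
  | .app M N, k, V => .app (substTm M k V) (substTm N k V)
  | .plus M N, k, V => .plus (substTm M k V) (substTm N k V)
  | .par M N, k, V => .par (substTm M k V) (substTm N k V)

def closedUnder : ℕ → Tm → Prop
  | d, .var n => n < d
  | d, .lam M => closedUnder (d+1) M
  | d, .app M N => closedUnder d M ∧ closedUnder d N
  | d, .plus M N => closedUnder d M ∧ closedUnder d N
  | d, .par M N => closedUnder d M ∧ closedUnder d N

def Closed (M : Tm) : Prop := closedUnder 0 M

/-- One-step reduction; the boolean flag records whether a +-reduction is used. -/
inductive Step : Bool → Tm → Tm → Prop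
  | beta {M V} : IsValue V → Step false (.app (.lam M) V) (substTm M 0 V)
  | plusL (M N) : Step true (.plus M N) M
  | plusR (M N) : Step true (.plus M N) N
  | parAppL (M N P) : Step false (.app (.par M N) P) (.par (.app M P) (.app N P))
  | parAppR {V} (M N) : IsValue V → Step false (.app V (.par M N)) (.par (.app V M) (.app V N))
  | parL {b M M'} (N) : Step b M M' → Step b (.par M N) (.par M' N)
  | parR {b N N'} (M) : Step b N N' → Step b (.par M N) (.par M N')
  | appL {b M M'} (N) : Step b M M' → ¬ IsPar M → Step b (.app M N) (.app M' N)
  | appR {b M M' V} : IsValue V → Step b M M' → ¬ IsPar M → Step b (.app V M) (.app V M')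

/-- The two contracta of a single +-redex, reduced in context. -/
inductive PlusPair : Tm → Tm → Tm → Prop
  | base (M N) : PlusPair (.plus M N) M N
  | parL {M M₁ M₂} (N) : PlusPair M M₁ M₂ → PlusPair (.par M N) (.par M₁ N) (.par M₂ N)
  | parR {N N₁ N₂} (M) : PlusPair N N₁ N₂ → PlusPair (.par M N) (.par M N₁) (.par M N₂)
  | appL {M M₁ M₂} (N) : PlusPair M M₁ M₂ → ¬ IsPar M → PlusPair (.app M N) (.app M₁ N) (.app M₂ N)
  | appR {M M₁ M₂ V} : IsValue V → PlusPair M M₁ M₂ → ¬ IsPar M → PlusPair (.app V M) (.app V M₁) (.app V M₂)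

/-- n-step reduction. -/
inductive Steps : ℕ → Tm → Tm → Prop
  | refl (M) : Steps 0 M M
  | head {b M N P n} : Step b M N → Steps n N P → Steps (n+1) M P

/-- A closed term converges iff it reduces to a parallel composition of values. -/
def Converges (M : Tm) : Prop :=
  ∃ (n : ℕ) (V : Tm) (Vs : List Tm), IsValue V ∧ (∀ W ∈ Vs, IsValue W) ∧
    Steps n M (Vs.foldl Tm.par V)

/-- Typing derivations, indexed by the measure |π|. -/
inductive Deriv : Ctx → Tm → PTy → ℕ → Prop
  | ax (x : ℕ) (τ : CTy) : Deriv (Ctx.single x τ) (.var x) (.ofC τ) 0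
  | lamI (n : ℕ) (Δ : Fin n → Ctx) (τ : Fin n → CTy) (α : Fin n → PTy) (ms : Fin n → ℕ)
      (M : Tm) :
      (∀ i, Deriv (Ctx.cons (τ i) (Δ i)) M (α i) (ms i)) →
      Deriv (tensCtxFin n Δ) (.lam M)
        (.ofC (tensFin n (fun i => .arr (τ i) (α i)))) (∑ i, ms i)
  | appE (k : ℕ) (hk : 0 < k) (nf : Fin k → ℕ) (hn : ∀ i, 0 < nf i)
      (τ : ∀ i : Fin k, Fin (nf i) → CTy) (α : ∀ i : Fin k, Fin (nf i) → PTy)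
      (Δ : Ctx) (Γ : Fin k → Ctx) (m0 : ℕ) (ms : Fin k → ℕ) (M N : Tm) :
      Deriv Δ M (parFin k (fun i => .ofC (tensFin (nf i) (fun j => .arr (τ i j) (α i j))))) m0 →
      (∀ i, Deriv (Γ i) N (parFin (nf i) (fun j => .ofC (τ i j))) (ms i)) →
      Deriv (Ctx.tens Δ (tensCtxFin k Γ)) (.app M N)
        (parFin k (fun i => parFin (nf i) (α i)))
        ((m0 + (∑ i, ms i) + (∑ i, 2 * nf i)) - 1)
  | plusL {Δ M α m} (N) : Deriv Δ M α m → Deriv Δ (.plus M N) α (m+1)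
  | plusR {Δ N α m} (M) : Deriv Δ N α m → Deriv Δ (.plus M N) α (m+1)
  | parI {Δ Γ M N α β m m'} : Deriv Δ M α m → Deriv Γ N β m' →
      Deriv (Ctx.tens Δ Γ) (.par M N) (.par α β) (m + m')
  | eqv {Γ Γ' M α α' m} : Deriv Γ M α m → CtxEq Γ Γ' → PEq α α' → Deriv Γ' M α' m

def deltaTm : Tm := .lam (.app (.var 0) (.var 0))
def OmegaTm : Tm := .app deltaTm deltaTm
def Idt : Tm := .lam (.var 0)
def dstarTm : Tm := .lam (.lam (.app (.var 1) (.var 1)))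
def YstarTm : Tm := .app dstarTm dstarTm

/-- The type (1⊸1)⊸(1⊸1). -/
def sepTy : CTy := .arr (.arr .one (.ofC .one)) (.ofC (.arr .one (.ofC .one)))
-- ===== Part 2 machinery =====
def atomsC : CTy → Multiset CTy
  | .one => 0
  | .tens a b => atomsC a + atomsC b
  | .arr σ γ => {CTy.arr σ γ}

def pAtoms : PTy → Multiset CTy
  | .ofC τ => {τ}
  | .par a b => pAtoms a + pAtoms b

def ArrR (x y : CTy) : Prop := ∃ a b c d, x = CTy.arr a b ∧ y = CTy.arr c d ∧ CEq a c ∧ PEq b d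

def RC (x y : CTy) : Prop := Multiset.Rel ArrR (atomsC x) (atomsC y)

theorem arrR_symm {x y} (h : ArrR x y) : ArrR y x := by
  obtain ⟨a,b,c,d,rfl,rfl,h1,h2⟩ := h
  exact ⟨c,d,a,b,rfl,rfl,h1.symm,h2.symm⟩

theorem arrR_trans {x y z} (h : ArrR x y) (h' : ArrR y z) : ArrR x z := by
  obtain ⟨a,b,c,d,rfl,rfl,h1,h2⟩ := h
  obtain ⟨a',b',c',d',he,rfl,h1',h2'⟩ := h'
  cases he
  exact ⟨a,b,c',d',rfl,rfl,h1.trans h1',h2.trans h2'⟩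

theorem rel_symm {α : Type*} {r : α → α → Prop} (hs : ∀ {x y}, r x y → r y x)
    {s t : Multiset α} (h : Multiset.Rel r s t) : Multiset.Rel r t s := by
  rw [← Multiset.rel_flip]
  exact h.mono (fun a _ b _ hab => hs hab)

theorem rel_trans {α : Type*} {r : α → α → Prop} (ht : ∀ {x y z}, r x y → r y z → r x z)
    {s t u : Multiset α} (h : Multiset.Rel r s t) (h' : Multiset.Rel r t u) :
    Multiset.Rel r s u := by
  induction h generalizing u with
  | zero => rw [Multiset.rel_zero_left.1 h']; exact Multiset.Rel.zero
  | @cons a b as bs hab _ ih =>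
    rw [Multiset.rel_cons_left] at h'
    obtain ⟨c, cs, hbc, hrel, rfl⟩ := h'
    exact Multiset.Rel.cons (ht hab hbc) (ih hrel)

theorem rel_mem_right {α : Type*} {r : α → α → Prop} {s t : Multiset α}
    (h : Multiset.Rel r s t) : ∀ x ∈ t, ∃ y ∈ s, r y x := by
  induction h with
  | zero => intro x hx; simp at hx
  | @cons a b as bs hab _ ih =>
    intro x hx
    rcases Multiset.mem_cons.1 hx with rfl | hx
    · exact ⟨a, Multiset.mem_cons_self _ _, hab⟩
    · obtain ⟨y, hy, hr⟩ := ih x hx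
      exact ⟨y, Multiset.mem_cons_of_mem hy, hr⟩

theorem relC_refl : ∀ τ, Multiset.Rel ArrR (atomsC τ) (atomsC τ)
  | .one => Multiset.Rel.zero
  | .tens a b => (relC_refl a).add (relC_refl b)
  | .arr σ γ => by
      show Multiset.Rel ArrR {CTy.arr σ γ} {CTy.arr σ γ}
      exact Multiset.Rel.cons ⟨σ,γ,σ,γ,rfl,rfl,CEq.refl _,PEq.refl _⟩ Multiset.Rel.zero

theorem relP_refl : ∀ α, Multiset.Rel RC (pAtoms α) (pAtoms α)
  | .ofC τ => Multiset.Rel.cons (r := RC) (relC_refl τ) Multiset.Rel.zero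
  | .par a b => (relP_refl a).add (relP_refl b)

theorem ceq_rel {τ ρ} (h : CEq τ ρ) : Multiset.Rel ArrR (atomsC τ) (atomsC ρ) := by
  refine CEq.rec (motive_1 := fun τ ρ _ => Multiset.Rel ArrR (atomsC τ) (atomsC ρ))
    (motive_2 := fun α β _ => Multiset.Rel RC (pAtoms α) (pAtoms β))
    ?_ ?_ ?_ ?_ ?_ ?_ ?_ ?_ ?_ ?_ ?_ ?_ ?_ ?_ ?_ h
  · exact fun τ => relC_refl τ
  · exact fun _ ih => rel_symm (r := ArrR) (fun h => arrR_symm h) ih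
  · exact fun _ _ ih1 ih2 => rel_trans (r := ArrR) (fun h h' => arrR_trans h h') ih1 ih2
  · intro τ ρ
    show Multiset.Rel ArrR (atomsC τ + atomsC ρ) (atomsC ρ + atomsC τ)
    rw [add_comm (atomsC ρ)]
    exact (relC_refl τ).add (relC_refl ρ)
  · intro τ ρ σ
    show Multiset.Rel ArrR (atomsC τ + atomsC ρ + atomsC σ) (atomsC τ + (atomsC ρ + atomsC σ))
    rw [add_assoc]
    exact (relC_refl τ).add ((relC_refl ρ).add (relC_refl σ))
  · intro τ
    show Multiset.Rel ArrR (atomsC τ + 0) (atomsC τ)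
    rw [add_zero]; exact relC_refl τ
  · exact fun _ _ ih1 ih2 => ih1.add ih2
  · intro τ τ' α α' h1 h2 _ _
    exact Multiset.Rel.cons ⟨τ,α,τ',α',rfl,rfl,h1,h2⟩ Multiset.Rel.zero
  · exact fun α => relP_refl α
  · exact fun _ ih => rel_symm (r := RC) (fun h => rel_symm (r := ArrR) (fun h' => arrR_symm h') h) ih
  · exact fun _ _ ih1 ih2 =>
      rel_trans (r := RC) (fun h h' => rel_trans (r := ArrR) (fun a b => arrR_trans a b) h h') ih1 ih2
  · intro α β
    show Multiset.Rel RC (pAtoms α + pAtoms β) (pAtoms β + pAtoms α)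
    rw [add_comm (pAtoms β)]
    exact (relP_refl α).add (relP_refl β)
  · intro α β γ
    show Multiset.Rel RC (pAtoms α + pAtoms β + pAtoms γ) (pAtoms α + (pAtoms β + pAtoms γ))
    rw [add_assoc]
    exact (relP_refl α).add ((relP_refl β).add (relP_refl γ))
  · exact fun _ _ ih1 ih2 => ih1.add ih2
  · exact fun _ ih => Multiset.Rel.cons (r := RC) ih Multiset.Rel.zero

theorem peq_rel {α β} (h : PEq α β) : Multiset.Rel RC (pAtoms α) (pAtoms β) := by
  refine PEq.rec (motive_1 := fun τ ρ _ => Multiset.Rel ArrR (atomsC τ) (atomsC ρ))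
    (motive_2 := fun α β _ => Multiset.Rel RC (pAtoms α) (pAtoms β))
    ?_ ?_ ?_ ?_ ?_ ?_ ?_ ?_ ?_ ?_ ?_ ?_ ?_ ?_ ?_ h
  · exact fun τ => relC_refl τ
  · exact fun _ ih => rel_symm (r := ArrR) (fun h => arrR_symm h) ih
  · exact fun _ _ ih1 ih2 => rel_trans (r := ArrR) (fun h h' => arrR_trans h h') ih1 ih2
  · intro τ ρ
    show Multiset.Rel ArrR (atomsC τ + atomsC ρ) (atomsC ρ + atomsC τ)
    rw [add_comm (atomsC ρ)]
    exact (relC_refl τ).add (relC_refl ρ)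
  · intro τ ρ σ
    show Multiset.Rel ArrR (atomsC τ + atomsC ρ + atomsC σ) (atomsC τ + (atomsC ρ + atomsC σ))
    rw [add_assoc]
    exact (relC_refl τ).add ((relC_refl ρ).add (relC_refl σ))
  · intro τ
    show Multiset.Rel ArrR (atomsC τ + 0) (atomsC τ)
    rw [add_zero]; exact relC_refl τ
  · exact fun _ _ ih1 ih2 => ih1.add ih2
  · intro τ τ' α α' h1 h2 _ _
    exact Multiset.Rel.cons ⟨τ,α,τ',α',rfl,rfl,h1,h2⟩ Multiset.Rel.zero
  · exact fun α => relP_refl α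
  · exact fun _ ih => rel_symm (r := RC) (fun h => rel_symm (r := ArrR) (fun h' => arrR_symm h') h) ih
  · exact fun _ _ ih1 ih2 =>
      rel_trans (r := RC) (fun h h' => rel_trans (r := ArrR) (fun a b => arrR_trans a b) h h') ih1 ih2
  · intro α β
    show Multiset.Rel RC (pAtoms α + pAtoms β) (pAtoms β + pAtoms α)
    rw [add_comm (pAtoms β)]
    exact (relP_refl α).add (relP_refl β)
  · intro α β γ
    show Multiset.Rel RC (pAtoms α + pAtoms β + pAtoms γ) (pAtoms α + (pAtoms β + pAtoms γ))
    rw [add_assoc]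
    exact (relP_refl α).add ((relP_refl β).add (relP_refl γ))
  · exact fun _ _ ih1 ih2 => ih1.add ih2
  · exact fun _ ih => Multiset.Rel.cons (r := RC) ih Multiset.Rel.zero

theorem ceq_one_atoms {σ} (h : CEq σ .one) : atomsC σ = 0 := by
  have h2 : Multiset.Rel ArrR (atomsC σ) 0 := by simpa [atomsC] using ceq_rel h
  exact Multiset.rel_zero_right.1 h2

/-- SHP: second-level goodness: every arrow atom has 1-equivalent domain. -/
def SHP (γ : PTy) : Prop :=
  ∀ c ∈ pAtoms γ, ∀ y ∈ atomsC c, ∃ ρ δ, y = CTy.arr ρ δ ∧ atomsC ρ = 0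

def DSty (β : PTy) : Prop :=
  ∀ τ ∈ pAtoms β, ∀ x ∈ atomsC τ, ∃ σ γ, x = CTy.arr σ γ ∧ SHP γ

theorem SHP_peq {γ γ'} (h : PEq γ γ') (hs : SHP γ) : SHP γ' := by
  intro c' hc' y' hy'
  obtain ⟨c, hc, hrc⟩ := rel_mem_right (peq_rel h) c' hc'
  obtain ⟨y, hy, hr⟩ := rel_mem_right hrc y' hy'
  obtain ⟨ρ, δ, rfl, hρ⟩ := hs c hc y hy
  obtain ⟨a,b,cc,dd,he,rfl,h1,h2⟩ := hr
  cases he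
  refine ⟨cc, dd, rfl, ?_⟩
  have := ceq_rel h1
  rw [hρ] at this
  exact (Multiset.rel_zero_left.1 this)

theorem DSty_peq {β β'} (h : PEq β β') (hs : DSty β) : DSty β' := by
  intro c' hc' y' hy'
  obtain ⟨c, hc, hrc⟩ := rel_mem_right (peq_rel h) c' hc'
  obtain ⟨y, hy, hr⟩ := rel_mem_right hrc y' hy'
  obtain ⟨σ, γ, rfl, hγ⟩ := hs c hc y hy
  obtain ⟨a,b,cc,dd,he,rfl,h1,h2⟩ := hr
  cases he
  exact ⟨cc, dd, rfl, SHP_peq h2 hγ⟩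

-- list lemmas
theorem mem_atoms_tensList {x : CTy} : ∀ {l : List CTy},
    x ∈ atomsC (tensList l) ↔ ∃ a ∈ l, x ∈ atomsC a := by
  intro l
  induction l with
  | nil => simp [tensList, atomsC]
  | cons a l ih =>
    show x ∈ atomsC (.tens a (tensList l)) ↔ _
    simp [atomsC, Multiset.mem_add, ih]

theorem mem_atoms_tensFin {n : ℕ} {f : Fin n → CTy} {x : CTy} :
    x ∈ atomsC (tensFin n f) ↔ ∃ i, x ∈ atomsC (f i) := by
  rw [tensFin, mem_atoms_tensList]
  constructor
  · rintro ⟨a, ha, hx⟩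
    obtain ⟨i, rfl⟩ := List.mem_ofFn.1 ha
    exact ⟨i, hx⟩
  · rintro ⟨i, hx⟩
    exact ⟨f i, List.mem_ofFn.2 ⟨i, rfl⟩, hx⟩

theorem mem_pAtoms_parList {x : CTy} : ∀ {l : List PTy},
    x ∈ pAtoms (parList l) → (∃ a ∈ l, x ∈ pAtoms a) ∨ x = .one := by
  intro l
  induction l with
  | nil => intro h; right; simpa [parList, pAtoms] using h
  | cons a l ih =>
    cases l with
    | nil => intro h; exact Or.inl ⟨a, by simp, h⟩
    | cons b r =>
      intro h
      rcases Multiset.mem_add.1 h with h | h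
      · exact Or.inl ⟨a, by simp, h⟩
      · rcases ih h with ⟨c, hc, hx⟩ | h
        · exact Or.inl ⟨c, List.mem_cons_of_mem _ hc, hx⟩
        · exact Or.inr h

theorem mem_pAtoms_parList_of {x : CTy} {a : PTy} : ∀ {l : List PTy},
    a ∈ l → x ∈ pAtoms a → x ∈ pAtoms (parList l) := by
  intro l
  induction l with
  | nil => intro h; simp at h
  | cons b l ih =>
    intro ha hx
    cases l with
    | nil =>
      rcases List.mem_singleton.1 ha with rfl
      exact hx
    | cons c r =>
      rcases List.mem_cons.1 ha with rfl | ha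
      · exact Multiset.mem_add.2 (Or.inl hx)
      · exact Multiset.mem_add.2 (Or.inr (ih ha hx))

theorem mem_pAtoms_parFin {n : ℕ} {f : Fin n → PTy} {x : CTy} :
    x ∈ pAtoms (parFin n f) → (∃ i, x ∈ pAtoms (f i)) ∨ x = .one := by
  intro h
  rcases mem_pAtoms_parList h with ⟨a, ha, hx⟩ | h
  · obtain ⟨i, rfl⟩ := List.mem_ofFn.1 ha
    exact Or.inl ⟨i, hx⟩
  · exact Or.inr h

theorem mem_pAtoms_parFin_of {n : ℕ} {f : Fin n → PTy} {x : CTy} {i : Fin n}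
    (hx : x ∈ pAtoms (f i)) : x ∈ pAtoms (parFin n f) :=
  mem_pAtoms_parList_of (List.mem_ofFn.2 ⟨i, rfl⟩) hx

theorem tensList_one {l : List CTy} (h : ∀ a ∈ l, CEq a .one) : CEq (tensList l) .one := by
  induction l with
  | nil => exact CEq.refl _
  | cons a l ih =>
    show CEq (.tens a (tensList l)) .one
    have : CEq (CTy.tens a (tensList l)) (.tens .one .one) :=
      CEq.tensCongr (h a (by simp)) (ih (fun b hb => h b (List.mem_cons_of_mem _ hb)))
    exact this.trans (CEq.unit .one)

def inner1 : Tm := .lam (.app (.var 1) (.var 1))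
def inner2 : Tm := .app (.var 1) (.var 1)

theorem main_inv {Γ M α m} (h : Deriv Γ M α m) :
    (M = YstarTm → SHP α) ∧ (M = dstarTm → DSty α) ∧ (M = inner1 → SHP α) ∧
    (M = inner2 → CEq (Γ 0) .one) ∧
    (∀ x, M = .var x → ∃ τ, CtxEq Γ (Ctx.single x τ) ∧ PEq α (.ofC τ)) := by
  induction h with
  | ax x τ =>
    refine ⟨?_, ?_, ?_, ?_, ?_⟩
    · intro h; simp [YstarTm] at h
    · intro h; simp [dstarTm] at h
    · intro h; simp [inner1] at h
    · intro h; simp [inner2] at h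
    · intro y h
      cases h
      exact ⟨τ, fun n => CEq.refl _, PEq.refl _⟩
  | lamI n Δ τ α ms M prem ih =>
    refine ⟨?_, ?_, ?_, ?_, ?_⟩
    · intro h; simp [YstarTm, dstarTm] at h
    · intro h
      have hM : M = inner1 := by
        simp only [dstarTm, inner1] at h ⊢; injection h
      intro c hc x hx
      rcases Multiset.mem_singleton.1 hc with rfl
      obtain ⟨i, hx⟩ := mem_atoms_tensFin.1 hx
      rcases Multiset.mem_singleton.1 hx with rfl
      exact ⟨τ i, α i, rfl, (ih i).2.2.1 hM⟩
    · intro h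
      have hM : M = inner2 := by
        simp only [inner1, inner2] at h ⊢; injection h
      intro c hc x hx
      rcases Multiset.mem_singleton.1 hc with rfl
      obtain ⟨i, hx⟩ := mem_atoms_tensFin.1 hx
      rcases Multiset.mem_singleton.1 hx with rfl
      refine ⟨τ i, α i, rfl, ?_⟩
      exact ceq_one_atoms ((ih i).2.2.2.1 hM)
    · intro h; simp [inner2] at h
    · intro y h; simp at h
  | appE k hk nf hn τ α Δ Γ m0 ms M N hf ha ihf iha =>
    refine ⟨?_, ?_, ?_, ?_, ?_⟩
    · intro h
      simp only [YstarTm] at h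
      injection h with h1 h2
      subst h1
      have hDS : DSty _ := (ihf).2.1 rfl
      intro c hc y hy
      rcases mem_pAtoms_parFin hc with ⟨i, hc⟩ | rfl
      · rcases mem_pAtoms_parFin hc with ⟨j, hc⟩ | rfl
        · have hmem : tensFin (nf i) (fun j => CTy.arr (τ i j) (α i j)) ∈
              pAtoms (parFin k (fun i => PTy.ofC (tensFin (nf i) (fun j => .arr (τ i j) (α i j))))) :=
            mem_pAtoms_parFin_of (i := i) (Multiset.mem_singleton.2 rfl)
          have harr : CTy.arr (τ i j) (α i j) ∈ atomsC (tensFin (nf i) (fun j => CTy.arr (τ i j) (α i j))) :=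
            mem_atoms_tensFin.2 ⟨j, Multiset.mem_singleton.2 rfl⟩
          obtain ⟨σ, γ, he, hshp⟩ := hDS _ hmem _ harr
          injection he with e1 e2
          subst e2
          exact hshp c hc y hy
        · simp [atomsC] at hy
      · simp [atomsC] at hy
    · intro h; simp [dstarTm] at h
    · intro h; simp [inner1] at h
    · intro h
      simp only [inner2] at h
      injection h with h1 h2
      obtain ⟨φ, hφctx, _⟩ := ihf.2.2.2.2 1 h1
      have hΔ0 : CEq (Δ 0) .one := by
        have := hφctx 0
        simpa [Ctx.single] using this
      have hΓ0 : CEq ((tensCtxFin k Γ) 0) .one := by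
        show CEq (tensFin k (fun i => Γ i 0)) .one
        rw [tensFin]
        apply tensList_one
        intro a ha
        obtain ⟨i, rfl⟩ := List.mem_ofFn.1 ha
        obtain ⟨ψ, hψ, _⟩ := (iha i).2.2.2.2 1 h2
        have := hψ 0
        simpa [Ctx.single] using this
      exact (CEq.tensCongr hΔ0 hΓ0).trans (CEq.unit _)
    · intro y h; simp at h
  | plusL N h ih =>
    exact ⟨fun h => by simp [YstarTm] at h, fun h => by simp [dstarTm] at h,
      fun h => by simp [inner1] at h, fun h => by simp [inner2] at h,
      fun x h => by simp at h⟩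
  | plusR M h ih =>
    exact ⟨fun h => by simp [YstarTm] at h, fun h => by simp [dstarTm] at h,
      fun h => by simp [inner1] at h, fun h => by simp [inner2] at h,
      fun x h => by simp at h⟩
  | parI h1 h2 ih1 ih2 =>
    exact ⟨fun h => by simp [YstarTm] at h, fun h => by simp [dstarTm] at h,
      fun h => by simp [inner1] at h, fun h => by simp [inner2] at h,
      fun x h => by simp at h⟩
  | eqv h hctx hpeq ih =>
    refine ⟨?_, ?_, ?_, ?_, ?_⟩
    · intro h'; exact SHP_peq hpeq (ih.1 h')
    · intro h'; exact DSty_peq hpeq (ih.2.1 h')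
    · intro h'; exact SHP_peq hpeq (ih.2.2.1 h')
    · intro h'; exact ((hctx 0).symm).trans (ih.2.2.2.1 h')
    · intro y h'
      obtain ⟨τ, hc, hp⟩ := ih.2.2.2.2 y h'
      exact ⟨τ, fun n => ((hctx n).symm).trans (hc n), (hpeq.symm).trans hp⟩

theorem part2 : ¬ ∃ m, Deriv Ctx.empty YstarTm (.ofC sepTy) m := by
  rintro ⟨m, h⟩
  have hs : SHP (.ofC sepTy) := (main_inv h).1 rfl
  have h1 : sepTy ∈ pAtoms (.ofC sepTy) := Multiset.mem_singleton.2 rfl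
  have h2 : sepTy ∈ atomsC sepTy := by simp [sepTy, atomsC]
  obtain ⟨ρ, δ, he, hρ⟩ := hs _ h1 _ h2
  rw [sepTy] at he
  injection he with e1 e2
  subst e1
  simp [atomsC] at hρ
-- ===== Part 1 =====
theorem part1 : ∃ m, Deriv Ctx.empty Idt (.ofC sepTy) m := by
  refine ⟨∑ _i : Fin 1, 0, ?_⟩
  have prem : ∀ i : Fin 1, Deriv (Ctx.cons (CTy.arr .one (.ofC .one)) Ctx.empty) (.var 0)
      (.ofC (CTy.arr .one (.ofC .one))) 0 := by
    intro _
    refine Deriv.eqv (Deriv.ax 0 (CTy.arr .one (.ofC .one))) ?_ (PEq.refl _)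
    intro n
    cases n with
    | zero => exact CEq.refl _
    | succ n => simp [Ctx.single, Ctx.cons, Ctx.empty]; exact CEq.refl _
  have h := Deriv.lamI 1 (fun _ => Ctx.empty) (fun _ => CTy.arr .one (.ofC .one))
      (fun _ => PTy.ofC (CTy.arr .one (.ofC .one))) (fun _ => 0) (.var 0) prem
  refine Deriv.eqv h ?_ ?_
  · intro n
    show CEq (tensFin 1 _) _
    exact CEq.unit .one
  · show PEq (.ofC (tensList [CTy.arr (CTy.arr .one (.ofC .one)) (PTy.ofC (CTy.arr .one (.ofC .one)))])) _
    exact PEq.ofC (CEq.unit sepTy)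
-- ===== Part 3 machinery =====
def Red (M N : Tm) : Prop := ∃ n, Steps n M N

theorem red_refl (M : Tm) : Red M M := ⟨0, Steps.refl M⟩

theorem red_of_step {b M N} (h : Step b M N) : Red M N := ⟨1, Steps.head h (Steps.refl N)⟩

theorem steps_trans {m n M N P} (h1 : Steps m M N) (h2 : Steps n N P) : Steps (m + n) M P := by
  induction h1 with
  | refl => simpa using h2
  | @head b M' N' P' k hs _ ih =>
    have := Steps.head hs (ih h2)
    simpa [Nat.add_assoc, Nat.add_comm, Nat.add_left_comm] using this

theorem red_trans {M N P} (h1 : Red M N) (h2 : Red N P) : Red M P := by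
  obtain ⟨m, h1⟩ := h1; obtain ⟨n, h2⟩ := h2; exact ⟨m + n, steps_trans h1 h2⟩

theorem red_parL {A A'} (B : Tm) (h : Red A A') : Red (.par A B) (.par A' B) := by
  obtain ⟨n, h⟩ := h
  refine ⟨n, ?_⟩
  induction h with
  | refl => exact Steps.refl _
  | head hs _ ih => exact Steps.head (Step.parL _ hs) ih

theorem red_parR {B B'} (A : Tm) (h : Red B B') : Red (.par A B) (.par A B') := by
  obtain ⟨n, h⟩ := h
  refine ⟨n, ?_⟩
  induction h with
  | refl => exact Steps.refl _
  | head hs _ ih => exact Steps.head (Step.parR _ hs) ih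

theorem isPar_iff {M : Tm} : IsPar M ↔ ∃ A B, M = .par A B := by
  cases M <;> simp [IsPar]

theorem value_not_par {M : Tm} (h : IsValue M) : ¬ IsPar M := by
  cases M <;> simp [IsValue, IsPar] at * 

theorem step_par {b M M'} (h : Step b M M') (hp : IsPar M) : IsPar M' := by
  obtain ⟨A, B, rfl⟩ := isPar_iff.1 hp
  cases h <;> simp [IsPar]

theorem steps_par {n M t} (h : Steps n M t) (hp : IsPar M) : IsPar t := by
  induction h with
  | refl => exact hp
  | head hs _ ih => exact ih (step_par hs hp)

/-- lift reduction of the function part when it reaches a value -/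
theorem red_appL_val {n F v} (h : Steps n F v) (hv : IsValue v) (P : Tm) :
    Red (.app F P) (.app v P) := by
  induction h with
  | refl => exact red_refl _
  | @head b M N P' k hs hrest ih =>
    have hnp : ¬ IsPar M := fun hp => value_not_par hv (steps_par (Steps.head hs hrest) hp)
    exact red_trans (red_of_step (Step.appL _ hs hnp)) (ih hv)

/-- lift reduction of the argument when it reaches a value -/
theorem red_appR_val {n N v} (h : Steps n N v) (hv : IsValue v) {F : Tm} (hF : IsValue F) :
    Red (.app F N) (.app F v) := by
  induction h with
  | refl => exact red_refl _
  | @head b M N' P' k hs hrest ih =>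
    have hnp : ¬ IsPar M := fun hp => value_not_par hv (steps_par (Steps.head hs hrest) hp)
    exact red_trans (red_of_step (Step.appR hF hs hnp)) (ih hv)

/-- terms converging to a parallel composition of values -/
inductive Comb : Tm → Prop
  | val {v} : IsValue v → Comb v
  | par {t v} : Comb t → IsValue v → Comb (.par t v)

def Conv (M : Tm) : Prop := ∃ n t, Steps n M t ∧ Comb t
def ConvV (M : Tm) : Prop := ∃ n v, Steps n M v ∧ IsValue v

theorem convV_conv {M} (h : ConvV M) : Conv M := by
  obtain ⟨n, v, h, hv⟩ := h; exact ⟨n, v, h, Comb.val hv⟩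

theorem comb_not_app {M N} (h : Comb (.app M N)) : False := by
  cases h with
  | val hv => simp [IsValue] at hv

theorem comb_par_inv {A B} (h : Comb (.par A B)) : Comb A ∧ IsValue B := by
  cases h with
  | val hv => simp [IsValue] at hv
  | par hc hv => exact ⟨hc, hv⟩

/-- decomposition of reductions of a par -/
theorem par_dec : ∀ {n A B t}, Steps n (.par A B) t →
    ∃ A' B' n₁ n₂, t = .par A' B' ∧ Steps n₁ A A' ∧ Steps n₂ B B' ∧ n₁ ≤ n ∧ n₂ ≤ n := by
  intro n
  induction n using Nat.strong_induction_on with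
  | _ n ih =>
    intro A B t h
    cases h with
    | refl => exact ⟨A, B, 0, 0, rfl, Steps.refl _, Steps.refl _, Nat.zero_le _, Nat.zero_le _⟩
    | @head b _ N _ k hs hrest =>
      cases hs with
      | @parL _ _ M' _ hstep =>
        obtain ⟨A', B', n₁, n₂, rfl, h1, h2, hle1, hle2⟩ := ih k (Nat.lt_succ_self _) hrest
        exact ⟨A', B', 0 + 1 + n₁, n₂, rfl, steps_trans (Steps.head hstep (Steps.refl _)) h1,
          h2, by omega, by omega⟩
      | @parR _ _ N' _ hstep =>
        obtain ⟨A', B', n₁, n₂, rfl, h1, h2, hle1, hle2⟩ := ih k (Nat.lt_succ_self _) hrest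
        exact ⟨A', B', n₁, 0 + 1 + n₂, rfl, h1,
          steps_trans (Steps.head hstep (Steps.refl _)) h2, by omega, by omega⟩
theorem conv_par_intro {A B} (hA : Conv A) (hB : ConvV B) : Conv (.par A B) := by
  obtain ⟨n, t, h1, hc⟩ := hA
  obtain ⟨m, v, h2, hv⟩ := hB
  obtain ⟨k, hk⟩ := red_trans (red_parL B ⟨n, h1⟩) (red_parR t ⟨m, h2⟩)
  exact ⟨k, .par t v, hk, Comb.par hc hv⟩

/-- values reached from an application split -/
theorem convV_app_dec : ∀ {n M N v}, Steps n (.app M N) v → IsValue v → ConvV M ∧ ConvV N := by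
  intro n
  induction n using Nat.strong_induction_on with
  | _ n ih =>
    intro M N v h hv
    cases h with
    | refl => simp [IsValue] at hv
    | @head b _ N' _ k hs hrest =>
      have hpar : ∀ {A B : Tm}, N' = .par A B → False := by
        rintro A B rfl
        exact value_not_par hv (steps_par hrest (by simp [IsPar]))
      cases hs with
      | @beta M' V hV => exact ⟨⟨0, _, Steps.refl _, trivial⟩, ⟨0, _, Steps.refl _, hV⟩⟩
      | parAppL A B P => exact absurd rfl hpar
      | @parAppR V A B hV => exact absurd rfl hpar
      | @appL b M M' _ hstep hnp =>
        obtain ⟨h1, h2⟩ := ih k (Nat.lt_succ_self _) hrest hv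
        obtain ⟨m, w, hw, hwv⟩ := h1
        exact ⟨⟨_, w, steps_trans (Steps.head hstep (Steps.refl _)) hw, hwv⟩, h2⟩
      | @appR b A A' V hV hstep hnp =>
        obtain ⟨h1, h2⟩ := ih k (Nat.lt_succ_self _) hrest hv
        obtain ⟨m, w, hw, hwv⟩ := h2
        exact ⟨h1, ⟨_, w, steps_trans (Steps.head hstep (Steps.refl _)) hw, hwv⟩⟩

/-- Key I-side lemma -/
theorem app_conv_dec : ∀ {n M N t}, Steps n (.app M N) t → Comb t →
    (ConvV N ∧ Conv M) ∨ (Conv N ∧ ConvV M) := by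
  intro n
  induction n using Nat.strong_induction_on with
  | _ n ih =>
    intro M N t h hc
    cases h with
    | refl => exact absurd hc comb_not_app
    | @head b _ N' _ k hs hrest =>
      cases hs with
      | @beta M' V hV =>
        exact Or.inl ⟨⟨0, _, Steps.refl _, hV⟩, ⟨0, _, Steps.refl _, Comb.val trivial⟩⟩
      | @parAppL M₁ M₂ P =>
        obtain ⟨t₁, t₂, n₁, n₂, rfl, h1, h2, hle1, hle2⟩ := par_dec hrest
        obtain ⟨hc1, hv2⟩ := comb_par_inv hc
        obtain ⟨hVM₂, hVN⟩ := convV_app_dec h2 hv2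
        have hd := ih n₁ (by omega) h1 hc1
        have hM₁ : Conv M₁ := by
          rcases hd with ⟨_, h⟩ | ⟨_, h⟩
          · exact h
          · exact convV_conv h
        exact Or.inl ⟨hVN, conv_par_intro hM₁ hVM₂⟩
      | @parAppR V N₁ N₂ hV =>
        obtain ⟨t₁, t₂, n₁, n₂, rfl, h1, h2, hle1, hle2⟩ := par_dec hrest
        obtain ⟨hc1, hv2⟩ := comb_par_inv hc
        obtain ⟨_, hVN₂⟩ := convV_app_dec h2 hv2
        have hd := ih n₁ (by omega) h1 hc1
        have hN₁ : Conv N₁ := by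
          rcases hd with ⟨h, _⟩ | ⟨h, _⟩
          · exact convV_conv h
          · exact h
        exact Or.inr ⟨conv_par_intro hN₁ hVN₂, ⟨0, _, Steps.refl _, hV⟩⟩
      | @appL b M M' _ hstep hnp =>
        rcases ih k (Nat.lt_succ_self _) hrest hc with ⟨h1, h2⟩ | ⟨h1, h2⟩
        · obtain ⟨m, w, hw, hww⟩ := h2
          exact Or.inl ⟨h1, ⟨_, w, steps_trans (Steps.head hstep (Steps.refl _)) hw, hww⟩⟩
        · obtain ⟨m, w, hw, hww⟩ := h2
          exact Or.inr ⟨h1, ⟨_, w, steps_trans (Steps.head hstep (Steps.refl _)) hw, hww⟩⟩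
      | @appR b A A' V hV hstep hnp =>
        rcases ih k (Nat.lt_succ_self _) hrest hc with ⟨h1, h2⟩ | ⟨h1, h2⟩
        · obtain ⟨m, w, hw, hww⟩ := h1
          exact Or.inl ⟨⟨_, w, steps_trans (Steps.head hstep (Steps.refl _)) hw, hww⟩, h2⟩
        · obtain ⟨m, w, hw, hww⟩ := h1
          exact Or.inr ⟨⟨_, w, steps_trans (Steps.head hstep (Steps.refl _)) hw, hww⟩, h2⟩
-- ===== Y* side =====
def Ystar1 : Tm := .lam YstarTm

theorem ystar1_value : IsValue Ystar1 := trivial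

theorem ystar_red_y1 : Red YstarTm Ystar1 := by
  have h : Step false (.app (.lam (.lam (.app (.var 1) (.var 1)))) dstarTm)
      (substTm (.lam (.app (.var 1) (.var 1))) 0 dstarTm) := Step.beta trivial
  have he : substTm (.lam (.app (.var 1) (.var 1))) 0 dstarTm = Ystar1 := by
    simp [substTm, shiftTm, dstarTm, Ystar1, YstarTm]
  rw [he] at h
  exact red_of_step h

theorem y1_app_val {v : Tm} (hv : IsValue v) : Red (.app Ystar1 v) YstarTm := by
  have h : Step false (.app (.lam YstarTm) v) (substTm YstarTm 0 v) := Step.beta hv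
  have he : substTm YstarTm 0 v = YstarTm := by
    simp [substTm, shiftTm, dstarTm, YstarTm]
  rw [he] at h
  exact red_of_step h

theorem y1_absorb {P : Tm} (h : ConvV P) : Red (.app Ystar1 P) Ystar1 := by
  obtain ⟨n, v, hs, hv⟩ := h
  exact red_trans (red_appR_val hs hv ystar1_value)
    (red_trans (y1_app_val hv) ystar_red_y1)

inductive CombY : Tm → Prop
  | base : CombY Ystar1
  | par {t} : CombY t → CombY (.par t Ystar1)

theorem combY_comb {t} (h : CombY t) : Comb t := by
  induction h with
  | base => exact Comb.val ystar1_value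
  | par _ ih => exact Comb.par ih ystar1_value

theorem combY_par {t} (h : CombY t) (hp : IsPar t) : ∃ a, t = .par a Ystar1 ∧ CombY a := by
  cases h with
  | base => simp [Ystar1, IsPar] at hp
  | par hc => exact ⟨_, rfl, hc⟩

/-- applying Ystar1 to a convergent argument -/
theorem y1_app_conv : ∀ {t}, Comb t → ∀ {n N}, Steps n N t →
    ∃ s, Red (.app Ystar1 N) s ∧ CombY s := by
  intro t hc
  induction hc with
  | @val v hv =>
    intro n N h
    exact ⟨Ystar1, y1_absorb ⟨n, v, h, hv⟩, CombY.base⟩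
  | @par t₁ t₂ hc1 hv2 ih =>
    intro n
    induction n using Nat.strong_induction_on with
    | _ n ihn =>
      intro N h
      by_cases hp : IsPar N
      · obtain ⟨N₁, N₂, rfl⟩ := isPar_iff.1 hp
        obtain ⟨A', B', n₁, n₂, he, h1, h2, _, _⟩ := par_dec h
        injection he with e1 e2
        subst e1; subst e2
        obtain ⟨s₁, hr1, hcy1⟩ := ih h1
        have hr2 : Red (.app Ystar1 N₂) Ystar1 := y1_absorb ⟨n₂, t₂, h2, hv2⟩
        refine ⟨.par s₁ Ystar1, ?_, CombY.par hcy1⟩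
        refine red_trans (red_of_step (Step.parAppR _ _ ystar1_value)) ?_
        exact red_trans (red_parL _ hr1) (red_parR _ hr2)
      · cases h with
        | refl => exact absurd (by simp [IsPar]) hp
        | @head b _ N' _ k hs hrest =>
          obtain ⟨s, hr, hcy⟩ := ihn k (Nat.lt_succ_self _) hrest
          exact ⟨s, red_trans (red_of_step (Step.appR ystar1_value hs hp)) hr, hcy⟩

/-- applying a term that reduces to a CombY to a value-convergent argument -/
theorem combY_app : ∀ {t}, CombY t → ∀ {n H}, Steps n H t → ∀ {P}, ConvV P →
    ∃ s, Red (.app H P) s ∧ CombY s := by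
  intro t hc
  induction hc with
  | base =>
    intro n H h P hP
    exact ⟨Ystar1, red_trans (red_appL_val h ystar1_value P) (y1_absorb hP), CombY.base⟩
  | @par t₀ hc0 ih =>
    intro n
    induction n using Nat.strong_induction_on with
    | _ n ihn =>
      intro H h P hP
      by_cases hp : IsPar H
      · obtain ⟨H₁, H₂, rfl⟩ := isPar_iff.1 hp
        obtain ⟨A', B', n₁, n₂, he, h1, h2, _, _⟩ := par_dec h
        injection he with e1 e2
        subst e1; subst e2
        obtain ⟨s₀, hr0, hcy0⟩ := ih h1 hP
        have hr1 : Red (.app H₂ P) Ystar1 :=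
          red_trans (red_appL_val h2 ystar1_value P) (y1_absorb hP)
        refine ⟨.par s₀ Ystar1, ?_, CombY.par hcy0⟩
        refine red_trans (red_of_step (Step.parAppL _ _ _)) ?_
        exact red_trans (red_parL _ hr0) (red_parR _ hr1)
      · cases h with
        | refl => exact absurd (by simp [IsPar]) hp
        | @head b _ H' _ k hs hrest =>
          obtain ⟨s, hr, hcy⟩ := ihn k (Nat.lt_succ_self _) hrest hP
          exact ⟨s, red_trans (red_of_step (Step.appL _ hs hp)) hr, hcy⟩

/-- folding value-convergent arguments onto a CombY head -/
theorem foldY : ∀ (Rs : List Tm), (∀ P ∈ Rs, ConvV P) → ∀ H,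
    (∃ s, Red H s ∧ CombY s) → ∃ s', Red (List.foldl Tm.app H Rs) s' ∧ CombY s' := by
  intro Rs
  induction Rs with
  | nil => intro _ H h; exact h
  | cons R Rs ihR =>
    intro hall H h
    obtain ⟨s, ⟨n, hn⟩, hcy⟩ := h
    obtain ⟨s', hr', hcy'⟩ := combY_app hcy hn (hall R (by simp))
    exact ihR (fun P hP => hall P (List.mem_cons_of_mem _ hP)) (.app H R) ⟨s', hr', hcy'⟩

theorem foldYV : ∀ (Qs : List Tm), (∀ P ∈ Qs, ConvV P) → ∀ H,
    Red H Ystar1 → Red (List.foldl Tm.app H Qs) Ystar1 := by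
  intro Qs
  induction Qs with
  | nil => intro _ H h; exact h
  | cons Q Qs ihQ =>
    intro hall H h
    obtain ⟨n, hn⟩ := h
    have h1 : Red (.app H Q) Ystar1 :=
      red_trans (red_appL_val hn ystar1_value Q) (y1_absorb (hall Q (by simp)))
    exact ihQ (fun P hP => hall P (List.mem_cons_of_mem _ hP)) (.app H Q) h1
theorem comb_foldl : ∀ (Vs : List Tm) (acc : Tm), Comb acc → (∀ W ∈ Vs, IsValue W) →
    Comb (Vs.foldl Tm.par acc) := by
  intro Vs
  induction Vs with
  | nil => intro acc h _; exact h
  | cons W Vs ih =>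
    intro acc h hall
    exact ih (.par acc W) (Comb.par h (hall W (by simp)))
      (fun X hX => hall X (List.mem_cons_of_mem _ hX))

theorem comb_to_foldl : ∀ {t}, Comb t →
    ∃ (V : Tm) (Vs : List Tm), IsValue V ∧ (∀ W ∈ Vs, IsValue W) ∧ t = Vs.foldl Tm.par V := by
  intro t h
  induction h with
  | @val v hv => exact ⟨v, [], hv, by simp, rfl⟩
  | @par t v hc hv ih =>
    obtain ⟨V, Vs, hV, hall, rfl⟩ := ih
    refine ⟨V, Vs ++ [v], hV, ?_, ?_⟩
    · intro W hW
      rcases List.mem_append.1 hW with h | h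
      · exact hall W h
      · rcases List.mem_singleton.1 h with rfl; exact hv
    · rw [List.foldl_append]; rfl

theorem converges_iff_conv {M : Tm} : Converges M ↔ Conv M := by
  constructor
  · rintro ⟨n, V, Vs, hV, hall, hs⟩
    exact ⟨n, _, hs, comb_foldl Vs V (Comb.val hV) hall⟩
  · rintro ⟨n, t, hs, hc⟩
    obtain ⟨V, Vs, hV, hall, rfl⟩ := comb_to_foldl hc
    exact ⟨n, V, Vs, hV, hall, hs⟩

theorem Ifold_convV : ∀ (Ps : List Tm), ConvV (List.foldl Tm.app Idt Ps) →
    ∀ P ∈ Ps, ConvV P := by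
  intro Ps
  induction Ps using List.reverseRecOn with
  | nil => intro _ P hP; simp at hP
  | append_singleton Qs P ih =>
    intro h Q hQ
    rw [List.foldl_append] at h
    obtain ⟨n, v, hs, hv⟩ := h
    obtain ⟨h1, h2⟩ := convV_app_dec hs hv
    rcases List.mem_append.1 hQ with h | h
    · exact ih h1 Q h
    · rcases List.mem_singleton.1 h with rfl; exact h2

theorem Ifold_split : ∀ (Ps : List Tm), Conv (List.foldl Tm.app Idt Ps) →
    (∀ P ∈ Ps, ConvV P) ∨
    (∃ Qs Q Rs, Ps = Qs ++ Q :: Rs ∧ (∀ P ∈ Qs, ConvV P) ∧ Conv Q ∧ (∀ P ∈ Rs, ConvV P)) := by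
  intro Ps
  induction Ps using List.reverseRecOn with
  | nil => intro _; left; intro P hP; simp at hP
  | append_singleton Qs P ih =>
    intro h
    rw [List.foldl_append] at h
    obtain ⟨n, t, hs, hc⟩ := h
    rcases app_conv_dec hs hc with ⟨hvP, hcF⟩ | ⟨hcP, hvF⟩
    · rcases ih hcF with hall | ⟨Qs', Q, Rs', rfl, hq, hQ, hr⟩
      · left
        intro X hX
        rcases List.mem_append.1 hX with h | h
        · exact hall X h
        · rcases List.mem_singleton.1 h with rfl; exact hvP
      · right
        refine ⟨Qs', Q, Rs' ++ [P], by simp, hq, hQ, ?_⟩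
        intro X hX
        rcases List.mem_append.1 hX with h | h
        · exact hr X h
        · rcases List.mem_singleton.1 h with rfl; exact hvP
    · right
      exact ⟨Qs, P, [], rfl, Ifold_convV Qs hvF, hcP, by simp⟩

theorem part3 : ∀ Ps : List Tm, (∀ P ∈ Ps, Closed P) →
    Converges (Ps.foldl Tm.app Idt) → Converges (Ps.foldl Tm.app YstarTm) := by
  intro Ps _ hconv
  rw [converges_iff_conv] at hconv ⊢
  rcases Ifold_split Ps hconv with hall | ⟨Qs, Q, Rs, rfl, hq, hQ, hr⟩
  · obtain ⟨s, hr, hcy⟩ := foldY Ps hall YstarTm ⟨Ystar1, ystar_red_y1, CombY.base⟩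
    obtain ⟨n, hn⟩ := hr
    exact ⟨n, s, hn, combY_comb hcy⟩
  · rw [List.foldl_append, List.foldl_cons]
    have hY : Red (List.foldl Tm.app YstarTm Qs) Ystar1 := foldYV Qs hq YstarTm ystar_red_y1
    obtain ⟨m, hm⟩ := hY
    obtain ⟨nq, tq, hsq, hcq⟩ := hQ
    obtain ⟨s, hrs, hcys⟩ := y1_app_conv hcq hsq
    have h1 : Red (.app (List.foldl Tm.app YstarTm Qs) Q) s :=
      red_trans (red_appL_val hm ystar1_value Q) hrs
    obtain ⟨s', hr', hcy'⟩ := foldY Rs hr _ ⟨s, h1, hcys⟩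
    obtain ⟨n, hn⟩ := hr'
    exact ⟨n, s', hn, combY_comb hcy'⟩

theorem no_full_abstraction :
    (∃ m, Deriv Ctx.empty Idt (.ofC sepTy) m) ∧
    (¬ ∃ m, Deriv Ctx.empty YstarTm (.ofC sepTy) m) ∧
    (∀ Ps : List Tm, (∀ P ∈ Ps, Closed P) →
      Converges (Ps.foldl Tm.app Idt) → Converges (Ps.foldl Tm.app YstarTm)) :=
  ⟨part1, part2, part3⟩
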